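/- Let 0 < x̲ < x̄ and 0 < y̲ < ȳ. The convex hull of the set S₂ = {(x, z₁, z₂) ∈ ℝ³ : x̲ ≤ x ≤ x̄, x/ȳ ≤ z₁ ≤ x/y̲, z₂ = z₁²/x} equals the set S̄₂ = {(x, z₁, z₂) ∈ ℝ³ : x̲ ≤ x ≤ x̄, z₁² ≤ x·z₂, x + y̲·ȳ·z₂ ≤ (y̲ + ȳ)·z₁}. -/

import Mathlib

set_option maxHeartbeats 1000000 in
/-- The convex hull of `S₂ = {(x, z₁, z₂) : x̲ ≤ x ≤ x̄, x/ȳ ≤ z₁ ≤ x/y̲, z₂ = z₁²/x}`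
equals `S̄₂ = {(x, z₁, z₂) : x̲ ≤ x ≤ x̄, z₁² ≤ x·z₂, x + y̲·ȳ·z₂ ≤ (y̲ + ȳ)·z₁}`. -/
theorem convexHull_S2_eq_S2bar (xlo xhi ylo yhi : ℝ)
    (hxlo : 0 < xlo) (hx : xlo < xhi) (hylo : 0 < ylo) (hy : ylo < yhi) :
    convexHull ℝ
        {p : ℝ × ℝ × ℝ | xlo ≤ p.1 ∧ p.1 ≤ xhi ∧ p.1 / yhi ≤ p.2.1 ∧
          p.2.1 ≤ p.1 / ylo ∧ p.2.2 = p.2.1 ^ 2 / p.1} =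
      {p : ℝ × ℝ × ℝ | xlo ≤ p.1 ∧ p.1 ≤ xhi ∧ p.2.1 ^ 2 ≤ p.1 * p.2.2 ∧
        p.1 + ylo * yhi * p.2.2 ≤ (ylo + yhi) * p.2.1} := by
  have hyhi : 0 < yhi := hylo.trans hy
  set S : Set (ℝ × ℝ × ℝ) := {p | xlo ≤ p.1 ∧ p.1 ≤ xhi ∧ p.1 / yhi ≤ p.2.1 ∧
          p.2.1 ≤ p.1 / ylo ∧ p.2.2 = p.2.1 ^ 2 / p.1} with hSdef
  apply Set.Subset.antisymm
  · apply convexHull_min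
    · rintro ⟨x, z1, z2⟩ ⟨h1, h2, h3, h4, h5⟩
      dsimp only at h1 h2 h3 h4 h5
      subst h5
      have hx0 : 0 < x := lt_of_lt_of_le hxlo h1
      have h3' : x ≤ yhi * z1 := by rw [div_le_iff₀ hyhi] at h3; linarith
      have h4' : ylo * z1 ≤ x := by rw [le_div_iff₀ hylo] at h4; linarith
      have hxz : x * (z1 ^ 2 / x) = z1 ^ 2 := by field_simp
      refine ⟨h1, h2, ?_, ?_⟩
      · dsimp only; rw [hxz]
      · dsimp only
        rw [← mul_le_mul_iff_right₀ hx0]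
        have hexp : x * (x + ylo * yhi * (z1 ^ 2 / x)) = x ^ 2 + ylo * yhi * z1 ^ 2 := by
          field_simp
        rw [hexp]
        nlinarith [mul_nonneg (sub_nonneg.2 h4') (sub_nonneg.2 h3')]
    · rintro ⟨xp, zp1, zp2⟩ ⟨hp1, hp2, hp3, hp4⟩ ⟨xq, zq1, zq2⟩ ⟨hq1, hq2, hq3, hq4⟩
        a b ha hb hab
      dsimp only at hp1 hp2 hp3 hp4 hq1 hq2 hq3 hq4
      have hxp : 0 < xp := lt_of_lt_of_le hxlo hp1
      have hxq : 0 < xq := lt_of_lt_of_le hxlo hq1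
      have sp : 0 ≤ xp * zp2 - zp1 ^ 2 := by linarith
      have sq' : 0 ≤ xq * zq2 - zq1 ^ 2 := by linarith
      simp only [Set.mem_setOf_eq, Prod.smul_fst, Prod.smul_snd, Prod.fst_add,
        Prod.snd_add, smul_eq_mul]
      refine ⟨by nlinarith, by nlinarith, ?_, by nlinarith⟩
      have t1 : 0 ≤ a * b * (xp * zq1 - xq * zp1) ^ 2 := by positivity
      have t2 : 0 ≤ a * a * (xp * xq) * (xp * zp2 - zp1 ^ 2) :=
        mul_nonneg (mul_nonneg (mul_nonneg ha ha) (mul_pos hxp hxq).le) sp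
      have t3 : 0 ≤ b * b * (xp * xq) * (xq * zq2 - zq1 ^ 2) :=
        mul_nonneg (mul_nonneg (mul_nonneg hb hb) (mul_pos hxp hxq).le) sq'
      have t4 : 0 ≤ a * b * xp ^ 2 * (xq * zq2 - zq1 ^ 2) :=
        mul_nonneg (mul_nonneg (mul_nonneg ha hb) (sq_nonneg xp)) sq'
      have t5 : 0 ≤ a * b * xq ^ 2 * (xp * zp2 - zp1 ^ 2) :=
        mul_nonneg (mul_nonneg (mul_nonneg ha hb) (sq_nonneg xq)) sp
      have hfinal : 0 ≤ xp * xq *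
          ((a * xp + b * xq) * (a * zp2 + b * zq2) - (a * zp1 + b * zq1) ^ 2) := by
        nlinarith [t1, t2, t3, t4, t5]
      nlinarith [hfinal, mul_pos hxp hxq]
  · rintro ⟨x, z1, z2⟩ ⟨h1, h2, h3, h4⟩
    dsimp only at h1 h2 h3 h4
    have hx0 : 0 < x := lt_of_lt_of_le hxlo h1
    have key : 0 ≤ (x - ylo * z1) * (yhi * z1 - x) := by
      nlinarith [mul_le_mul_of_nonneg_left h4 hx0.le,
        mul_le_mul_of_nonneg_left h3 (le_of_lt (mul_pos hylo hyhi))]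
    have hz1 : 0 < z1 := by
      by_contra hcon
      push_neg at hcon
      nlinarith [key, mul_nonneg hx0.le (neg_nonneg.2 hcon),
        mul_nonneg (mul_nonneg hylo.le hyhi.le) (mul_self_nonneg z1), mul_pos hx0 hx0]
    have ha' : x / yhi ≤ z1 := by
      rw [div_le_iff₀ hyhi]
      nlinarith [key, mul_pos (sub_pos.2 hy) hz1, sq_nonneg (x - yhi * z1)]
    have hb' : z1 ≤ x / ylo := by
      rw [le_div_iff₀ hylo]
      nlinarith [key, mul_pos (sub_pos.2 hy) hz1, sq_nonneg (x - ylo * z1)]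
    obtain ⟨A, hA⟩ : ∃ A : ℝ, A = x / yhi := ⟨_, rfl⟩
    obtain ⟨B, hB⟩ : ∃ B : ℝ, B = x / ylo := ⟨_, rfl⟩
    have hA' : A ≤ z1 := hA ▸ ha'
    have hB' : z1 ≤ B := hB ▸ hb'
    have hAB : A < B := by rw [hA, hB]; exact div_lt_div_of_pos_left hx0 hylo hy
    have hABne : B - A ≠ 0 := ne_of_gt (sub_pos.2 hAB)
    obtain ⟨l, hl⟩ : ∃ l : ℝ, l = (B - z1) / (B - A) := ⟨_, rfl⟩
    have hl0 : 0 ≤ l := hl ▸ div_nonneg (by linarith) (by linarith)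
    have hl1 : l ≤ 1 := by
      rw [hl, div_le_one (sub_pos.2 hAB)]; linarith
    have hlin : l * A + (1 - l) * B = z1 := by
      have h : l * (B - A) = B - z1 := by rw [hl]; exact div_mul_cancel₀ _ hABne
      linear_combination -h
    obtain ⟨c, hc⟩ : ∃ c : ℝ, c = ((ylo + yhi) * z1 - x) / (ylo * yhi) := ⟨_, rfl⟩
    have hz2c : z2 ≤ c := by
      rw [hc, le_div_iff₀ (mul_pos hylo hyhi)]; nlinarith [h4]
    have hwz2 : z1 ^ 2 / x ≤ z2 := by
      rw [div_le_iff₀ hx0]; nlinarith [h3]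
    have hcc : l * (A ^ 2 / x) + (1 - l) * (B ^ 2 / x) = c := by
      have h1' : l * A ^ 2 + (1 - l) * B ^ 2 = (A + B) * z1 - A * B := by
        linear_combination (A + B) * hlin
      have hApB : A + B = x * (ylo + yhi) / (ylo * yhi) := by
        rw [hA, hB]; field_simp
      have hABm : A * B = x ^ 2 / (ylo * yhi) := by
        rw [hA, hB]; field_simp
      have hsplit : l * (A ^ 2 / x) + (1 - l) * (B ^ 2 / x)
          = (l * A ^ 2 + (1 - l) * B ^ 2) / x := by ring
      rw [hsplit, h1', hApB, hABm, hc]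
      field_simp
    have hq0 : ((x, z1, z1 ^ 2 / x) : ℝ × ℝ × ℝ) ∈ S := ⟨h1, h2, ha', hb', rfl⟩
    have hq1 : ((x, A, A ^ 2 / x) : ℝ × ℝ × ℝ) ∈ S :=
      ⟨h1, h2, hA.ge, hAB.le.trans hB.le, rfl⟩
    have hq2 : ((x, B, B ^ 2 / x) : ℝ × ℝ × ℝ) ∈ S :=
      ⟨h1, h2, le_trans hA.ge hAB.le, hB.le, rfl⟩
    have hC : Convex ℝ (convexHull ℝ S) := convex_convexHull ℝ S
    have hr : (l : ℝ) • ((x, A, A ^ 2 / x) : ℝ × ℝ × ℝ) + (1 - l) • (x, B, B ^ 2 / x)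
        ∈ convexHull ℝ S :=
      hC (subset_convexHull ℝ S hq1) (subset_convexHull ℝ S hq2) hl0 (by linarith) (by ring)
    by_cases hdeg : c ≤ z1 ^ 2 / x
    · have h5 : z2 = z1 ^ 2 / x := le_antisymm (hz2c.trans hdeg) hwz2
      exact subset_convexHull ℝ S ⟨h1, h2, ha', hb', h5⟩
    · push_neg at hdeg
      obtain ⟨μ, hμ⟩ : ∃ μ : ℝ, μ = (c - z2) / (c - z1 ^ 2 / x) := ⟨_, rfl⟩
      have hd0 : 0 < c - z1 ^ 2 / x := sub_pos.2 hdeg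
      have hμ0 : 0 ≤ μ := hμ ▸ div_nonneg (by linarith) hd0.le
      have hμ1 : μ ≤ 1 := by rw [hμ, div_le_one hd0]; linarith
      have hμc : μ * (c - z1 ^ 2 / x) = c - z2 := by
        rw [hμ]; exact div_mul_cancel₀ _ (ne_of_gt hd0)
      have hpt : ((x, z1, z2) : ℝ × ℝ × ℝ) =
          μ • ((x, z1, z1 ^ 2 / x) : ℝ × ℝ × ℝ) +
            (1 - μ) • (l • ((x, A, A ^ 2 / x) : ℝ × ℝ × ℝ) + (1 - l) • (x, B, B ^ 2 / x)) := by
        simp only [Prod.smul_mk, Prod.mk_add_mk, smul_eq_mul, Prod.mk.injEq]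
        refine ⟨by ring, ?_, ?_⟩
        · linear_combination (μ - 1) * hlin
        · linear_combination (μ - 1) * hcc + hμc
      rw [hpt]
      exact hC (subset_convexHull ℝ S hq0) hr hμ0 (by linarith) (by ring)
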